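/- Suppose a ∈ C²(ℝ) satisfies a' > 0 and a'' > 0 on ℝ, and F satisfies F' = a. Let N ≥ 6 and X = {X_1,…,X_N} ⊂ K_a be a set of N distinct points with X_i = P(u_i, v_i). If X has an order that forms a T_N configuration and rank(A_X − Π^N(X_i)) ≤ 2 for some i ∈ {1,…,N}, then there exist constants λ₁^i, λ₂^i ∈ ℝ such that for all j = 1,…,N: h_j^i·a^i(r_j^i) = λ₁^i·h_j^i + λ₂^i·a^i(r_j^i) and (h_j^i)²/2 + F^i(r_j^i) = λ₁^i·r_j^i + λ₂^i·h_j^i. -/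
import Mathlib


open Matrix

lemma aux_three_line {f : ℝ → ℝ} (hconv : StrictConvexOn ℝ Set.univ f) {s A x y z : ℝ}
    (hx : f x = s * x + A) (hy : f y = s * y + A) (hz : f z = s * z + A)
    (hxy : x ≠ y) (hxz : x ≠ z) (hyz : y ≠ z) : False := by
  have hord : ∀ p q r : ℝ, p < q → q < r → f p = s * p + A → f q = s * q + A →
      f r = s * r + A → False := by
    intro p q r h1 h2 hp hq hr
    have hs := hconv.slope_strict_mono_adjacent (Set.mem_univ p) (Set.mem_univ r) h1 h2
    rw [hp, hq, hr] at hs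
    have e1 : (s * q + A - (s * p + A)) / (q - p) = s := by
      rw [div_eq_iff (sub_ne_zero.mpr h1.ne')]; ring
    have e2 : (s * r + A - (s * q + A)) / (r - q) = s := by
      rw [div_eq_iff (sub_ne_zero.mpr h2.ne')]; ring
    rw [e1, e2] at hs
    exact lt_irrefl _ hs
  rcases lt_trichotomy x y with h1 | h1 | h1
  · rcases lt_trichotomy y z with h2 | h2 | h2
    · exact hord x y z h1 h2 hx hy hz
    · exact hyz h2
    · rcases lt_trichotomy x z with h3 | h3 | h3
      · exact hord x z y h3 h2 hx hz hy
      · exact hxz h3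
      · exact hord z x y h3 h1 hz hx hy
  · exact hxy h1
  · rcases lt_trichotomy x z with h2 | h2 | h2
    · exact hord y x z h1 h2 hy hx hz
    · exact hxz h2
    · rcases lt_trichotomy y z with h3 | h3 | h3
      · exact hord y z x h3 h2 hy hz hx
      · exact hyz h3
      · exact hord z y x h3 h1 hz hy hx

lemma exists_left_null {k : Type*} [Fintype k] (M : Matrix (Fin 3) k ℝ)
    (h : M.rank ≤ 2) : ∃ c : Fin 3 → ℝ, c ≠ 0 ∧ ∀ j, (c ᵥ* M) j = 0 := by
  have hrt : Mᵀ.rank ≤ 2 := by rw [Matrix.rank_transpose]; exact h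
  have hdim := LinearMap.finrank_range_add_finrank_ker (Mᵀ.mulVecLin)
  rw [Module.finrank_pi] at hdim
  have hker : LinearMap.ker Mᵀ.mulVecLin ≠ ⊥ := by
    intro hbot
    rw [hbot, finrank_bot] at hdim
    have : Mᵀ.rank = 3 := by rw [Matrix.rank]; simpa using hdim
    omega
  obtain ⟨c, hc, hc0⟩ := Submodule.exists_mem_ne_zero_of_ne_bot hker
  refine ⟨c, hc0, fun j => ?_⟩
  have : Mᵀ.mulVecLin c = 0 := hc
  have h2 : c ᵥ* M = 0 := by simpa [Matrix.mulVecLin_apply] using this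
  exact congrFun h2 j


noncomputable section

/-- The map `P(u,v)` into `ℝ^{3×2}` from the paper. -/
def Pmat (a F : ℝ → ℝ) (u v : ℝ) : Matrix (Fin 3) (Fin 2) ℝ :=
  !![u, v; a v, u; u * a v, u ^ 2 / 2 + F v]

/-- The ordered family `X` forms a `T_N` configuration. -/
def IsTNConfig {m n N : ℕ} (X : Fin N → Matrix (Fin m) (Fin n) ℝ) : Prop :=
  4 ≤ N ∧ Function.Injective X ∧
    (∀ i j, i ≠ j → (X i - X j).rank ≠ 1) ∧
    ∃ (B : Matrix (Fin m) (Fin n) ℝ) (C : Fin N → Matrix (Fin m) (Fin n) ℝ)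
      (κ : Fin N → ℝ),
      (∀ i, 1 < κ i) ∧ (∀ i, (C i).rank = 1) ∧ (∑ i, C i = 0) ∧
      ∀ i, X i = B + (∑ j ∈ Finset.univ.filter (fun j => j < i), C j) + κ i • C i

/-- The family `X` has an order (enumeration) that forms a `T_N` configuration. -/
def HasTNOrder {m n N : ℕ} (X : Fin N → Matrix (Fin m) (Fin n) ℝ) : Prop :=
  ∃ σ : Equiv.Perm (Fin N), IsTNConfig (X ∘ σ)

/-- The matrix `A_X - Π^N(Q) ∈ ℝ^{3 × 2N}`, with the `2N` columns indexed by
`Fin N ⊕ Fin N`: the first `N` columns are `(u_j, a(v_j), u_j a(v_j))ᵀ - (first column of Q)`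
and the last `N` columns are `(v_j, u_j, u_j²/2 + F(v_j))ᵀ - (second column of Q)`. -/
def AmatDiff (a F : ℝ → ℝ) {N : ℕ} (u v : Fin N → ℝ)
    (Q : Matrix (Fin 3) (Fin 2) ℝ) : Matrix (Fin 3) (Fin N ⊕ Fin N) ℝ :=
  Matrix.of fun i => Sum.elim
    (fun j => Pmat a F (u j) (v j) i 0 - Q i 0)
    (fun j => Pmat a F (u j) (v j) i 1 - Q i 1)

/-- If `a ∈ C²` with `a' > 0`, `a'' > 0`, `F' = a`, `N ≥ 6`, the `N` distinct points
`X_i = P(u_i, v_i) ∈ K_a` have an order forming a `T_N` configuration, and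
`rank(A_X - Π^N(X_i)) ≤ 2` for some `i`, then there are constants `λ₁^i, λ₂^i` with
`h_j^i a^i(r_j^i) = λ₁^i h_j^i + λ₂^i a^i(r_j^i)` and
`(h_j^i)²/2 + F^i(r_j^i) = λ₁^i r_j^i + λ₂^i h_j^i` for all `j`. -/
theorem stmt_11 (a F : ℝ → ℝ)
    (ha : ContDiff ℝ 2 a)
    (ha' : ∀ x : ℝ, 0 < deriv a x)
    (ha'' : ∀ x : ℝ, 0 < deriv (deriv a) x)
    (hF : ∀ x : ℝ, HasDerivAt F (a x) x)
    (N : ℕ) (hN : 6 ≤ N)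
    (u v : Fin N → ℝ)
    (X : Fin N → Matrix (Fin 3) (Fin 2) ℝ)
    (hX : ∀ i, X i = Pmat a F (u i) (v i))
    (hdist : Function.Injective X)
    (hTN : HasTNOrder X)
    (i : Fin N)
    (hrank : (AmatDiff a F u v (X i)).rank ≤ 2) :
    ∃ l1 l2 : ℝ, ∀ j : Fin N,
      (u j - u i) * (a (v j) - a (v i)) =
        l1 * (u j - u i) + l2 * (a (v j) - a (v i)) ∧
      (u j - u i) ^ 2 / 2 + (F (v j) - F (v i) - a (v i) * (v j - v i)) =
        l1 * (v j - v i) + l2 * (u j - u i) := by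
  obtain ⟨c, hc0, hc⟩ := exists_left_null _ hrank
  have E1 : ∀ j : Fin N, c 0 * (u j - u i) + c 1 * (a (v j) - a (v i))
      + c 2 * (u j * a (v j) - u i * a (v i)) = 0 := by
    intro j
    have := hc (Sum.inl j)
    simpa [AmatDiff, Pmat, hX, vecMul, dotProduct, Fin.sum_univ_three] using this
  have E2 : ∀ j : Fin N, c 0 * (v j - v i) + c 1 * (u j - u i)
      + c 2 * ((u j ^ 2 / 2 + F (v j)) - (u i ^ 2 / 2 + F (v i))) = 0 := by
    intro j
    have := hc (Sum.inr j)
    simpa [AmatDiff, Pmat, hX, vecMul, dotProduct, Fin.sum_univ_three] using this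
  -- injectivity transfer
  have hUV : ∀ j k : Fin N, u j = u k → v j = v k → j = k := by
    intro j k hu hv
    exact hdist (by rw [hX, hX, hu, hv])
  by_cases hc2 : c 2 = 0
  · exfalso
    rw [hc2] at E1 E2
    by_cases hc1 : c 1 = 0
    · have hcne : c 0 ≠ 0 := by
        intro h0
        apply hc0
        funext r
        fin_cases r <;> simp [h0, hc1, hc2]
      -- all u j = u i, v j = v i
      have hj : ∀ j, u j = u i ∧ v j = v i := by
        intro j
        have e1 := E1 j; have e2 := E2 j
        rw [hc1] at e1 e2
        constructor
        · have : c 0 * (u j - u i) = 0 := by linarith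
          have := mul_eq_zero.mp this
          rcases this with h | h
          · exact absurd h hcne
          · linarith
        · have : c 0 * (v j - v i) = 0 := by linarith
          rcases mul_eq_zero.mp this with h | h
          · exact absurd h hcne
          · linarith
      -- two distinct indices
      obtain ⟨j, hji⟩ := Fintype.exists_ne_of_one_lt_card (by simp; omega) i
      exact hji (hUV j i (hj j).1 (hj j).2)
    · -- c 1 ≠ 0 : points on a line, contradiction with strict convexity
      set s : ℝ := (c 0 / c 1) ^ 2 with hs
      have hlin : ∀ j, a (v j) = s * v j + (a (v i) - s * v i) := by
        intro j
        have e1 := E1 j; have e2 := E2 j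
        have hu : u j - u i = -(c 0 / c 1) * (v j - v i) := by
          field_simp
          linarith
        rw [hu] at e1
        have key : (a (v j) - a (v i)) * c 1 ^ 2 = c 0 ^ 2 * (v j - v i) := by
          field_simp at e1
          linear_combination e1
        have hc1sq : c 1 ^ 2 ≠ 0 := pow_ne_zero _ hc1
        have : a (v j) - a (v i) = s * (v j - v i) := by
          rw [hs, div_pow, div_mul_eq_mul_div, eq_div_iff hc1sq]
          linarith [key]
        linarith [this]
      have hvinj : Function.Injective v := by
        intro j k hv
        apply hUV j k ?_ hv
        have e1 := E1 j
        have hu : ∀ j, u j = u i - (c 0 / c 1) * (v j - v i) := by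
          intro j
          have e2 := E2 j
          field_simp
          linarith
        rw [hu j, hu k, hv]
      have hconv : StrictConvexOn ℝ Set.univ a := by
        apply strictConvexOn_univ_of_deriv2_pos ha.continuous
        intro x
        simpa [Function.iterate_succ, Function.comp] using ha'' x
      have h6 : (6 : ℕ) ≤ N := hN
      have j0 : Fin N := ⟨0, by omega⟩
      exact aux_three_line hconv (hlin ⟨0, by omega⟩) (hlin ⟨1, by omega⟩) (hlin ⟨2, by omega⟩)
        (fun h => by have := hvinj h; simp [Fin.ext_iff] at this)
        (fun h => by have := hvinj h; simp [Fin.ext_iff] at this)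
        (fun h => by have := hvinj h; simp [Fin.ext_iff] at this)
  · -- main case
    refine ⟨-(c 0 / c 2) - a (v i), -(c 1 / c 2) - u i, fun j => ?_⟩
    have e1 := E1 j; have e2 := E2 j
    constructor
    · field_simp
      nlinarith [e1]
    · field_simp
      nlinarith [e2]
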